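/- Let L be a finite group with normal subgroups K ≤ N ≤ L (both normal in L) such that N/K is abelian. Then the number of commuting pairs satisfies |{(x,y) ∈ L × L : xy = yx}| ≥ |L|² / (|K| · |L:N|²). -/

import Mathlib

open scoped commutatorElement

/-- P. Neumann's inequality: if `K ≤ N` are normal subgroups of a
finite group `L` with `N/K` abelian, then
`|{commuting pairs}| ≥ |L|² / (|K|·|L:N|²)`. -/
theorem stmt7 {L : Type*} [Group L] [Finite L]
    (K N : Subgroup L) (hKN : K ≤ N) [K.Normal] [N.Normal]
    (hab : ∀ x ∈ N, ∀ y ∈ N, ⁅x, y⁆ ∈ K) :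
    Nat.card L ^ 2 ≤
      Nat.card {p : L × L | p.1 * p.2 = p.2 * p.1} * (Nat.card K * N.index ^ 2) := by
  classical
  -- section: for each (x,k) choose y with ⁅x,y⁆ = k, if such exists
  set σ : L → L → L := fun x k => if h : ∃ y : L, ⁅x, y⁆ = k then h.choose else 1 with hσ
  have hσ_spec : ∀ x y : L, ⁅x, σ x ⁅x, y⁆⁆ = ⁅x, y⁆ := by
    intro x y
    have h : ∃ z : L, ⁅x, z⁆ = ⁅x, y⁆ := ⟨y, rfl⟩
    simp only [hσ, dif_pos h]
    exact h.choose_spec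
  -- key group computation: same commutator ⇒ quotient commutes with x
  have key : ∀ x y₀ y : L, ⁅x, y₀⁆ = ⁅x, y⁆ → x * (y₀⁻¹ * y) = (y₀⁻¹ * y) * x := by
    intro x y₀ y h
    simp only [commutatorElement_def] at h
    have h3 : y₀ * x * y₀⁻¹ = y * x * y⁻¹ := by
      have := congrArg (fun t => (x⁻¹ * t)⁻¹) h
      simpa [mul_assoc] using this
    calc x * (y₀⁻¹ * y) = y₀⁻¹ * (y₀ * x * y₀⁻¹) * y := by group
      _ = y₀⁻¹ * (y * x * y⁻¹) * y := by rw [h3]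
      _ = (y₀⁻¹ * y) * x := by group
  -- injection N × N ↪ commuting pairs × K
  set S : Set (L × L) := {p : L × L | p.1 * p.2 = p.2 * p.1} with hS
  have hcard : Nat.card (N × N) ≤ Nat.card (S × K) := by
    apply Nat.card_le_card_of_injective (fun p : N × N =>
      ((⟨((p.1 : L), (σ p.1 ⁅(p.1 : L), (p.2 : L)⁆)⁻¹ * p.2),
        key p.1 _ p.2 (hσ_spec p.1 p.2)⟩ : S),
       (⟨⁅(p.1 : L), (p.2 : L)⁆, hab _ p.1.2 _ p.2.2⟩ : K)))
    intro p q hpq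
    simp only [Prod.mk.injEq, Subtype.mk.injEq] at hpq
    obtain ⟨⟨hx, hz⟩, hk⟩ := hpq
    rw [hx] at hk hz
    rw [hk] at hz
    have hy : (p.2 : L) = q.2 := mul_left_cancel hz
    exact Prod.ext (Subtype.ext hx) (Subtype.ext hy)
  rw [Nat.card_prod, Nat.card_prod] at hcard
  have hNN : Nat.card N * Nat.card N = Nat.card N ^ 2 := (sq (Nat.card N)).symm
  have hL : Nat.card N * N.index = Nat.card L := Subgroup.card_mul_index N
  calc Nat.card L ^ 2 = (Nat.card N * N.index) ^ 2 := by rw [hL]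
    _ = Nat.card N * Nat.card N * N.index ^ 2 := by ring
    _ ≤ Nat.card S * Nat.card K * N.index ^ 2 :=
        Nat.mul_le_mul_right _ hcard
    _ = Nat.card S * (Nat.card K * N.index ^ 2) := by ring
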